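/- For any family {Θ_i}_{i∈I} of sets of partial functions from X to V, the lub closure of the union ∪{Θ_i | i ∈ I} equals the family lub of the closures: overline(∪{Θ_i | i ∈ I}) = ⊔{Θ̄_i | i ∈ I}. -/
import Mathlib


/- Partial functions X ⇀ V are modeled as functions `X → Option V`. -/

variable {X V E : Type*}

/-- `θ` is less informative than `θ'` (θ ⊑ θ'): wherever `θ` is defined, `θ'` is
defined with the same value. -/
def PFle (θ θ' : X → Option V) : Prop :=
  ∀ x v, θ x = some v → θ' x = some v

/-- The everywhere-undefined partial function ⊥. -/
def pbot : X → Option V := fun _ => none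

/-- `θ'` is an upper bound of the set `Θ` of partial functions. -/
def IsUB (Θ : Set (X → Option V)) (θ' : X → Option V) : Prop :=
  ∀ θ ∈ Θ, PFle θ θ'

/-- `θ'` is the least upper bound (⊔Θ) of the set `Θ` of partial functions. -/
def IsLubPF (Θ : Set (X → Option V)) (θ' : X → Option V) : Prop :=
  IsUB Θ θ' ∧ ∀ θ'', IsUB Θ θ'' → PFle θ' θ''

/-- Θ is lub closed: every subset of Θ admitting an upper bound has its lub in Θ. -/
def LubClosed (Θ : Set (X → Option V)) : Prop :=
  ∀ Θ' ⊆ Θ, ∀ u, IsLubPF Θ' u → u ∈ Θ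

/-- The lub closure of Θ: the intersection of all lub closed sets including Θ. -/
def lubClosure (Θ : Set (X → Option V)) : Set (X → Option V) :=
  ⋂₀ {Θ' | Θ ⊆ Θ' ∧ LubClosed Θ'}

/-- The family lub ⊔{Θ_i | i ∈ I}. -/
def famLub {I : Type*} (Θ : I → Set (X → Option V)) : Set (X → Option V) :=
  {θ | ∃ f : I → (X → Option V), (∀ i, f i ∈ Θ i) ∧ IsLubPF (Set.range f) θ}

lemma PFle_refl (θ : X → Option V) : PFle θ θ := fun _ _ h => h

lemma PFle_trans {a b c : X → Option V} (h1 : PFle a b) (h2 : PFle b c) : PFle a c :=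
  fun x v h => h2 x v (h1 x v h)

lemma pbot_le (θ : X → Option V) : PFle pbot θ := fun _ _ h => by simp [pbot] at h

lemma isLub_empty : IsLubPF (∅ : Set (X → Option V)) pbot :=
  ⟨fun _ h => h.elim, fun θ'' _ => pbot_le θ''⟩

lemma subset_lubClosure (Θ : Set (X → Option V)) : Θ ⊆ lubClosure Θ :=
  fun _ hθ _ hS => hS.1 hθ

lemma lubClosure_closed (Θ : Set (X → Option V)) : LubClosed (lubClosure Θ) := by
  intro T hT u hu S hS
  exact hS.2 T (fun θ hθ => hT hθ S hS) u hu

lemma lubClosure_min {Θ S : Set (X → Option V)} (h1 : Θ ⊆ S) (h2 : LubClosed S) :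
    lubClosure Θ ⊆ S := fun θ hθ => hθ S ⟨h1, h2⟩

lemma pbot_mem_lubClosure (Θ : Set (X → Option V)) : pbot ∈ lubClosure Θ :=
  lubClosure_closed Θ ∅ (Set.empty_subset _) pbot isLub_empty

open Classical in
/-- The lub of a set of partial functions (meaningful when an upper bound exists). -/
noncomputable def lubFun (T : Set (X → Option V)) : X → Option V :=
  fun x => if h : ∃ v, ∃ θ ∈ T, θ x = some v then some h.choose else none

lemma lubFun_isLub {T : Set (X → Option V)} {b : X → Option V} (hb : IsUB T b) :
    IsLubPF T (lubFun T) := by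
  constructor
  · intro θ hθ x v hx
    have h : ∃ v, ∃ θ ∈ T, θ x = some v := ⟨v, θ, hθ, hx⟩
    simp only [lubFun, dif_pos h]
    obtain ⟨θ', hθ', hθ'x⟩ := h.choose_spec
    have h1 := hb θ' hθ' x _ hθ'x
    have h2 := hb θ hθ x v hx
    rw [h1] at h2
    exact congrArg some (Option.some.inj h2)
  · intro w hw x v hx
    by_cases h : ∃ v, ∃ θ ∈ T, θ x = some v
    · simp only [lubFun, dif_pos h] at hx
      obtain ⟨θ', hθ', hθ'x⟩ := h.choose_spec
      exact hw θ' hθ' x v (by rw [hθ'x, Option.some.inj hx])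
    · simp [lubFun, dif_neg h] at hx

/-- The lub closure of a union equals the family lub of the closures. -/
theorem stmt12 {I : Type*} (Θ : I → Set (X → Option V)) :
    lubClosure (⋃ i, Θ i) = famLub (fun i => lubClosure (Θ i)) := by
  classical
  apply Set.Subset.antisymm
  · -- lubClosure(⋃) ⊆ famLub: famLub contains the union and is lub closed
    apply lubClosure_min
    · -- union ⊆ famLub
      intro θ hθ
      obtain ⟨j, hj⟩ := Set.mem_iUnion.mp hθ
      refine ⟨fun i => if h : i = j then θ else pbot, fun i => ?_, ?_, ?_⟩
      · by_cases h : i = j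
        · subst h; simpa using subset_lubClosure (Θ i) hj
        · simpa [h] using pbot_mem_lubClosure (Θ i)
      · rintro η ⟨i, rfl⟩
        by_cases h : i = j
        · simp [h]; exact PFle_refl θ
        · simp [h]; exact pbot_le θ
      · intro w hw
        simpa using hw _ ⟨j, rfl⟩
    · -- famLub is lub closed
      intro S hS u hu
      choose F hF1 hF2 using fun θ (h : θ ∈ S) => hS h
      set T : I → Set (X → Option V) := fun i => {η | ∃ θ, ∃ h : θ ∈ S, F θ h i = η} with hT
      have hTub : ∀ i, IsUB (T i) u := by
        rintro i η ⟨θ, hθ, rfl⟩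
        exact PFle_trans ((hF2 θ hθ).1 _ ⟨i, rfl⟩) (hu.1 θ hθ)
      set g : I → (X → Option V) := fun i => lubFun (T i) with hg
      have hgl : ∀ i, IsLubPF (T i) (g i) := fun i => lubFun_isLub (hTub i)
      refine ⟨g, fun i => ?_, ?_, ?_⟩
      · exact lubClosure_closed (Θ i) (T i)
          (by rintro η ⟨θ, hθ, rfl⟩; exact hF1 θ hθ i) (g i) (hgl i)
      · rintro η ⟨i, rfl⟩
        exact (hgl i).2 u (hTub i)
      · intro w hw
        apply hu.2
        intro θ hθ
        apply (hF2 θ hθ).2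
        rintro η ⟨i, rfl⟩
        exact PFle_trans ((hgl i).1 _ ⟨θ, hθ, rfl⟩) (hw _ ⟨i, rfl⟩)
  · -- famLub ⊆ lubClosure(⋃)
    rintro θ ⟨f, hf, hlub⟩
    apply lubClosure_closed (⋃ i, Θ i) (Set.range f) ?_ θ hlub
    rintro η ⟨i, rfl⟩
    exact lubClosure_min (fun x hx => subset_lubClosure _ (Set.mem_iUnion.mpr ⟨i, hx⟩))
      (lubClosure_closed _) (hf i)
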